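/- Hadamard–Lévy theorem: Let X, Y be Banach spaces and f : X → Y a C¹ map such that df(x) is a linear isomorphism for all x and sup_x ‖df(x)⁻¹‖ < ∞. Then f is a global diffeomorphism (bijective with C¹ inverse) of X onto Y. -/

import Mathlib

open Set Metric Filter Function
open scoped NNReal

set_option linter.unusedSectionVars false
set_option linter.unusedVariables false
set_option maxHeartbeats 1000000

section HadamardAux

variable {X Y : Type*} [NormedAddCommGroup X] [NormedSpace ℝ X] [CompleteSpace X]
    [NormedAddCommGroup Y] [NormedSpace ℝ Y] [CompleteSpace Y]

/-- Local inverse chart data for `f` at `x`. -/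
lemma hl_exists_chart {f : X → Y} (hf : ContDiff ℝ 1 f) {f' : X → X ≃L[ℝ] Y}
    (hf' : ∀ x, HasFDerivAt f (f' x : X →L[ℝ] Y) x) {β : ℝ} (hβ : 0 < β)
    (hbound : ∀ x, ‖((f' x).symm : Y →L[ℝ] X)‖ ≤ β) (x : X) :
    ∃ (U : Set X) (V : Set Y) (g : Y → X),
      IsOpen U ∧ x ∈ U ∧ Set.InjOn f U ∧ IsOpen V ∧ f x ∈ V ∧
      (∀ w ∈ V, f (g w) = w) ∧ g (f x) = x ∧
      LipschitzOnWith (β.toNNReal + 1) g V := by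
  have hstrict : HasStrictFDerivAt f (f' x : X →L[ℝ] Y) x :=
    hf.contDiffAt.hasStrictFDerivAt' (hf' x) one_ne_zero
  set P := hstrict.toOpenPartialHomeomorph f with hP
  have hcoe : (P : X → Y) = f := rfl
  have hxU : x ∈ P.source := hstrict.mem_toOpenPartialHomeomorph_source
  have hlt : ‖((f' x).symm : Y →L[ℝ] X)‖₊ < β.toNNReal + 1 := by
    have h1 : ‖((f' x).symm : Y →L[ℝ] X)‖₊ ≤ β.toNNReal := by
      rw [← norm_toNNReal]
      exact Real.toNNReal_mono (hbound x)
    exact lt_of_le_of_lt h1 (lt_add_of_le_of_pos le_rfl one_pos)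
  obtain ⟨s, hs, hls⟩ :=
    hstrict.to_localInverse.exists_lipschitzOnWith_of_nnnorm_lt _ hlt
  refine ⟨P.source, P.target ∩ interior s, P.symm, P.open_source, hxU, ?_, ?_, ?_, ?_, ?_, ?_⟩
  · have := P.injOn
    rwa [hcoe] at this
  · exact P.open_target.inter isOpen_interior
  · exact ⟨P.map_source hxU, mem_interior_iff_mem_nhds.2 hs⟩
  · intro w hw
    have := P.right_inv hw.1
    rwa [hcoe] at this
  · have := P.left_inv hxU
    rwa [hcoe] at this
  · have : (hstrict.localInverse f _ _ : Y → X) = P.symm := rfl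
    rw [← this]
    exact hls.mono (fun w hw => interior_subset hw.2)

/-- Uniqueness of continuous lifts through `f` on an interval. -/
lemma hl_lift_unique {f : X → Y} (hf : ContDiff ℝ 1 f) {f' : X → X ≃L[ℝ] Y}
    (hf' : ∀ x, HasFDerivAt f (f' x : X →L[ℝ] Y) x) {β : ℝ} (hβ : 0 < β)
    (hbound : ∀ x, ‖((f' x).symm : Y →L[ℝ] X)‖ ≤ β)
    {c : ℝ → Y} {σ τ : ℝ → X} {T : ℝ} (hT : 0 ≤ T)
    (hσc : ContinuousOn σ (Icc 0 T)) (hτc : ContinuousOn τ (Icc 0 T))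
    (hσ : ∀ t ∈ Icc 0 T, f (σ t) = c t) (hτ : ∀ t ∈ Icc 0 T, f (τ t) = c t)
    (h0 : σ 0 = τ 0) : ∀ t ∈ Icc 0 T, σ t = τ t := by
  haveI : PreconnectedSpace (Icc (0:ℝ) T) := Subtype.preconnectedSpace isPreconnected_Icc
  set E : Set (Icc (0:ℝ) T) := {t | σ t.1 = τ t.1} with hE
  have hσr : Continuous fun t : Icc (0:ℝ) T => σ t.1 := hσc.restrict
  have hτr : Continuous fun t : Icc (0:ℝ) T => τ t.1 := hτc.restrict
  have hclosed : IsClosed E := isClosed_eq hσr hτr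
  have hopen : IsOpen E := by
    rw [isOpen_iff_mem_nhds]
    rintro t₀ ht₀
    obtain ⟨U, V, g, hU, hxU, hinj, -, -, -, -, -⟩ :=
      hl_exists_chart hf hf' hβ hbound (σ t₀.1)
    have hτU : τ t₀.1 ∈ U := by rwa [← ht₀]
    have h1 : {t : Icc (0:ℝ) T | σ t.1 ∈ U} ∈ nhds t₀ :=
      hσr.continuousAt.preimage_mem_nhds (hU.mem_nhds hxU)
    have h2 : {t : Icc (0:ℝ) T | τ t.1 ∈ U} ∈ nhds t₀ :=
      hτr.continuousAt.preimage_mem_nhds (hU.mem_nhds hτU)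
    filter_upwards [h1, h2] with t hσt hτt
    exact hinj hσt hτt (by rw [hσ t.1 t.2, hτ t.1 t.2])
  have hne : E.Nonempty := ⟨⟨0, le_rfl, hT⟩, h0⟩
  have : E = univ := IsClopen.eq_univ ⟨hclosed, hopen⟩ hne
  intro t ht
  have : (⟨t, ht⟩ : Icc (0:ℝ) T) ∈ E := this ▸ mem_univ _
  exact this


/-- Existence of lifts of Lipschitz paths through `f`, with uniform Lipschitz bound. -/
lemma hl_lift_exists {f : X → Y} (hf : ContDiff ℝ 1 f) {f' : X → X ≃L[ℝ] Y}
    (hf' : ∀ x, HasFDerivAt f (f' x : X →L[ℝ] Y) x) {β : ℝ} (hβ : 0 < β)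
    (hbound : ∀ x, ‖((f' x).symm : Y →L[ℝ] X)‖ ≤ β)
    {M : ℝ≥0} {c : ℝ → Y} (hc : LipschitzOnWith M c (Icc 0 1))
    {x₀ : X} (hx₀ : f x₀ = c 0) :
    ∃ σ : ℝ → X, σ 0 = x₀ ∧ (∀ t ∈ Icc 0 1, f (σ t) = c t) ∧
      LipschitzOnWith ((β.toNNReal + 1) * M) σ (Icc 0 1) := by
  classical
  set K : ℝ≥0 := (β.toNNReal + 1) * M with hK
  set A : Set ℝ := {T | T ∈ Icc (0:ℝ) 1 ∧ ∃ σ : ℝ → X, σ 0 = x₀ ∧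
      LipschitzOnWith K σ (Icc 0 T) ∧ ∀ t ∈ Icc 0 T, f (σ t) = c t} with hA
  have h0A : (0:ℝ) ∈ A := by
    refine ⟨⟨le_rfl, zero_le_one⟩, fun _ => x₀, rfl,
      ((LipschitzWith.const x₀).weaken (zero_le : (0:ℝ≥0) ≤ K)).lipschitzOnWith, ?_⟩
    intro t ht
    have : t = 0 := le_antisymm ht.2 ht.1
    rw [this, hx₀]
  have hbdd : BddAbove A := ⟨1, fun T hT => hT.1.2⟩
  have hT0 : 0 ≤ sSup A := le_csSup hbdd h0A
  have hT1 : sSup A ≤ 1 := csSup_le ⟨0, h0A⟩ fun T hT => hT.1.2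
  have hch : ∀ T, T ∈ A → ∃ σ : ℝ → X, σ 0 = x₀ ∧
      LipschitzOnWith K σ (Icc 0 T) ∧ ∀ t ∈ Icc 0 T, f (σ t) = c t := fun T hT => hT.2
  choose L hL0 hLlip hLf using hch
  have compat : ∀ T (hT : T ∈ A) T' (hT' : T' ∈ A) t, t ∈ Icc 0 (min T T') →
      L T hT t = L T' hT' t := by
    intro T hT T' hT' t ht
    refine hl_lift_unique hf hf' hβ hbound (le_min hT.1.1 hT'.1.1)
      ((hLlip T hT).continuousOn.mono (Icc_subset_Icc_right (min_le_left _ _)))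
      ((hLlip T' hT').continuousOn.mono (Icc_subset_Icc_right (min_le_right _ _)))
      (fun s hs => hLf T hT s ⟨hs.1, hs.2.trans (min_le_left _ _)⟩)
      (fun s hs => hLf T' hT' s ⟨hs.1, hs.2.trans (min_le_right _ _)⟩)
      (by rw [hL0, hL0]) t ht
  have hKnn : (0:ℝ) ≤ (K:ℝ) := K.coe_nonneg
  -- main step : sSup A ∈ A
  have hsup_mem : sSup A ∈ A := by
    rcases eq_or_lt_of_le hT0 with h | h
    · rw [← h]; exact h0A
    · set Ts := sSup A with hTs
      set Sg : ℝ → X := fun t =>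
        if hex : ∃ T, T ∈ A ∧ t ≤ T then L hex.choose hex.choose_spec.1 t else x₀ with hSg
      have hSg : ∀ T (hT : T ∈ A), ∀ t ∈ Icc 0 T, Sg t = L T hT t := by
        intro T hT t ht
        have hex : ∃ T', T' ∈ A ∧ t ≤ T' := ⟨T, hT, ht.2⟩
        show dite _ _ _ = _
        rw [dif_pos hex]
        exact compat _ _ _ _ t ⟨ht.1, le_min hex.choose_spec.2 ht.2⟩
      have hSgeat : ∀ t ∈ Ico (0:ℝ) Ts, f (Sg t) = c t := by
        intro t ht
        obtain ⟨T, hTA', htT⟩ := exists_lt_of_lt_csSup ⟨0, h0A⟩ ht.2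
        rw [hSg T hTA' t ⟨ht.1, htT.le⟩]
        exact hLf T hTA' t ⟨ht.1, htT.le⟩
      have hSglip : ∀ t ∈ Ico (0:ℝ) Ts, ∀ t' ∈ Ico (0:ℝ) Ts,
          dist (Sg t) (Sg t') ≤ K * dist t t' := by
        intro t ht t' ht'
        obtain ⟨T, hTA', htT⟩ := exists_lt_of_lt_csSup ⟨0, h0A⟩ (max_lt ht.2 ht'.2)
        have h1 : t ∈ Icc 0 T := ⟨ht.1, ((le_max_left _ _).trans htT.le)⟩
        have h2 : t' ∈ Icc 0 T := ⟨ht'.1, ((le_max_right _ _).trans htT.le)⟩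
        rw [hSg T hTA' t h1, hSg T hTA' t' h2]
        exact (hLlip T hTA').dist_le_mul t h1 t' h2
      set u : ℕ → ℝ := fun n => Ts - Ts / (n + 2) with hu
      have hun : ∀ n : ℕ, (1:ℝ) ≤ (n:ℝ) + 2 := by
        intro n; have := Nat.cast_nonneg (α := ℝ) n; linarith
      have hu_mem : ∀ n, u n ∈ Ico (0:ℝ) Ts := by
        intro n
        have h1 : Ts / ((n:ℝ) + 2) ≤ Ts := div_le_self h.le (hun n)
        have h2 : 0 < Ts / ((n:ℝ) + 2) := div_pos h (by linarith [hun n])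
        exact ⟨by show (0:ℝ) ≤ Ts - Ts / ((n:ℝ) + 2); linarith,
          by show Ts - Ts / ((n:ℝ) + 2) < Ts; linarith⟩
      have hdiv : Tendsto (fun n : ℕ => Ts / ((n:ℝ) + 2)) atTop (nhds 0) := by
        have h0 := (tendsto_const_div_atTop_nhds_zero_nat Ts).comp (tendsto_add_atTop_nat 2)
        have heq : (fun n : ℕ => Ts / ((n:ℝ) + 2))
            = (fun n : ℕ => Ts / (n:ℝ)) ∘ (fun n => n + 2) := by
          funext n
          simp only [Function.comp_apply]
          push_cast
          ring
        rw [heq]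
        exact h0
      have hul : Tendsto u atTop (nhds Ts) := by
        have h0 := hdiv.const_sub Ts
        simpa using h0
      have hcauchy : CauchySeq fun n => Sg (u n) := by
        refine cauchySeq_of_le_tendsto_0 (fun N => (K:ℝ) * (Ts / ((N:ℝ) + 2))) ?_ ?_
        · intro n m N hn hm
          have key : ∀ k : ℕ, N ≤ k → Ts - Ts / ((k:ℝ)+2) ∈ Icc (Ts - Ts/((N:ℝ)+2)) Ts := by
            intro k hk
            have hle : Ts / ((k:ℝ)+2) ≤ Ts / ((N:ℝ)+2) := by
              apply div_le_div_of_nonneg_left h.le (by linarith [hun N])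
              have : (N:ℝ) ≤ (k:ℝ) := Nat.cast_le.2 hk
              linarith
            have : 0 < Ts / ((k:ℝ) + 2) := div_pos h (by linarith [hun k])
            constructor <;> [linarith; linarith]
          have h1 := key n hn
          have h2 := key m hm
          have hd : dist (u n) (u m) ≤ Ts / ((N:ℝ)+2) := by
            rw [Real.dist_eq]
            have h3 := h1.1; have h4 := h1.2; have h5 := h2.1; have h6 := h2.2
            rw [abs_le]
            constructor <;> simp only [hu] <;> [linarith; linarith]
          calc dist (Sg (u n)) (Sg (u m)) ≤ K * dist (u n) (u m) :=
                hSglip _ (hu_mem n) _ (hu_mem m)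
            _ ≤ K * (Ts / ((N:ℝ)+2)) := by
                exact mul_le_mul_of_nonneg_left hd hKnn
        · simpa using hdiv.const_mul (K:ℝ)
      obtain ⟨ℓ, hℓ⟩ := cauchySeq_tendsto_of_complete hcauchy
      set σs : ℝ → X := fun t => if t < Ts then Sg t else ℓ with hσs
      have hσs_lt : ∀ t, t < Ts → σs t = Sg t := fun t ht => if_pos ht
      have hσs_end : σs Ts = ℓ := if_neg (lt_irrefl _)
      have hIccsub : ∀ n, u n ∈ Icc (0:ℝ) 1 :=
        fun n => ⟨(hu_mem n).1, (hu_mem n).2.le.trans hT1⟩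
      have hTs1 : Ts ∈ Icc (0:ℝ) 1 := ⟨hT0, hT1⟩
      have hfl : f ℓ = c Ts := by
        have h1 : Tendsto (fun n => f (Sg (u n))) atTop (nhds (f ℓ)) :=
          ((hf.continuous.tendsto ℓ).comp hℓ)
        have h2 : Tendsto (fun n => c (u n)) atTop (nhds (c Ts)) := by
          apply tendsto_iff_dist_tendsto_zero.2
          apply squeeze_zero (fun n => dist_nonneg)
            (fun n => hc.dist_le_mul _ (hIccsub n) _ hTs1)
          have := (tendsto_iff_dist_tendsto_zero.1 hul).const_mul (M:ℝ)
          simpa [mul_comm] using this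
        have heq : (fun n => f (Sg (u n))) = fun n => c (u n) := by
          funext n; exact hSgeat _ (hu_mem n)
        rw [heq] at h1
        exact tendsto_nhds_unique h1 h2
      have hend_dist : ∀ t ∈ Ico (0:ℝ) Ts, dist (Sg t) ℓ ≤ K * (Ts - t) := by
        intro t ht
        have h1 : Tendsto (fun n => dist (Sg t) (Sg (u n))) atTop (nhds (dist (Sg t) ℓ)) :=
          tendsto_const_nhds.dist hℓ
        refine le_of_tendsto h1 ?_
        filter_upwards [hul.eventually (eventually_gt_nhds ht.2)] with n hn
        calc dist (Sg t) (Sg (u n)) ≤ K * dist t (u n) := hSglip _ ht _ (hu_mem n)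
          _ ≤ K * (Ts - t) := by
              apply mul_le_mul_of_nonneg_left _ hKnn
              rw [Real.dist_eq, abs_le]
              have := (hu_mem n).2
              constructor <;> linarith
      refine ⟨hTs1, σs, ?_, ?_, ?_⟩
      · rw [hσs_lt 0 h, hSg 0 h0A 0 ⟨le_rfl, le_rfl⟩, hL0]
      · apply LipschitzOnWith.of_dist_le_mul
        have aux : ∀ t ∈ Icc (0:ℝ) Ts, ∀ t' ∈ Icc (0:ℝ) Ts, t ≤ t' →
            dist (σs t) (σs t') ≤ K * dist t t' := by
          intro t ht t' ht' htt'
          rcases lt_or_eq_of_le ht'.2 with h' | h'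
          · rw [hσs_lt t (lt_of_le_of_lt htt' h'), hσs_lt t' h']
            exact hSglip t ⟨ht.1, lt_of_le_of_lt htt' h'⟩ t' ⟨ht'.1, h'⟩
          · rcases lt_or_eq_of_le htt' with h'' | h''
            · have htTs : t < Ts := by rw [← h']; exact h''
              rw [h', hσs_end, hσs_lt t htTs]
              calc dist (Sg t) ℓ ≤ K * (Ts - t) := hend_dist t ⟨ht.1, htTs⟩
                _ = K * dist t Ts := by
                    rw [Real.dist_eq, abs_of_nonpos (by linarith)]; ring
            · rw [h'', dist_self]
              positivity
        intro t ht t' ht'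
        rcases le_total t t' with h' | h'
        · exact aux t ht t' ht' h'
        · rw [dist_comm, dist_comm t t']; exact aux t' ht' t ht h'
      · intro t ht
        rcases lt_or_eq_of_le ht.2 with h' | h'
        · rw [hσs_lt t h']; exact hSgeat t ⟨ht.1, h'⟩
        · subst h'; rw [hσs_end]; exact hfl
  -- second step : sSup A = 1
  have hsup1 : sSup A = 1 := by
    by_contra hne
    have hlt : sSup A < 1 := lt_of_le_of_ne hT1 hne
    obtain ⟨-, σs, hσ0, hσlip, hσf⟩ := hsup_mem
    set Ts := sSup A
    have hfx : f (σs Ts) = c Ts := hσf Ts ⟨hT0, le_rfl⟩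
    obtain ⟨U, V, g, hU, hxU, hinj, hV, hfxV, hfV, hgfx, hglip⟩ :=
      hl_exists_chart hf hf' hβ hbound (σs Ts)
    rw [hfx] at hfxV hgfx
    obtain ⟨ρ, hρ, hball⟩ := Metric.isOpen_iff.1 hV _ hfxV
    have hM0 : (0:ℝ) ≤ (M:ℝ) := M.coe_nonneg
    set ε : ℝ := min (1 - Ts) (ρ / (2 * ((M:ℝ) + 1))) with hε
    have hε0 : 0 < ε := lt_min (by linarith) (div_pos hρ (by linarith))
    set T' : ℝ := Ts + ε with hT'
    have hT'1 : T' ≤ 1 := by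
      have := min_le_left (1 - Ts) (ρ / (2 * ((M:ℝ) + 1)))
      simp only [hT']; linarith
    have hT'0 : 0 ≤ T' := by linarith
    have hcball : ∀ t, Ts ≤ t → t ≤ T' → c t ∈ V := by
      intro t h1 h2
      apply hball
      rw [mem_ball]
      have hmem : t ∈ Icc (0:ℝ) 1 := ⟨le_trans hT0 h1, h2.trans hT'1⟩
      have hd : dist (c t) (c Ts) ≤ M * dist t Ts := hc.dist_le_mul _ hmem _ ⟨hT0, hT1⟩
      have hd2 : dist t Ts ≤ ε := by
        rw [Real.dist_eq, abs_of_nonneg (by linarith)]; simp only [hT'] at h2; linarith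
      have hεa : ε ≤ ρ / (2 * ((M:ℝ) + 1)) := min_le_right _ _
      calc dist (c t) (c Ts) ≤ (M:ℝ) * ε := le_trans hd (mul_le_mul_of_nonneg_left hd2 hM0)
        _ ≤ (M:ℝ) * (ρ / (2 * ((M:ℝ) + 1))) := mul_le_mul_of_nonneg_left hεa hM0
        _ < ρ := by
            have h2M : 0 < 2 * ((M:ℝ) + 1) := by linarith
            calc (M:ℝ) * (ρ / (2 * ((M:ℝ) + 1))) = (M:ℝ) / (2 * ((M:ℝ) + 1)) * ρ := by ring
              _ < 1 * ρ := by
                  apply mul_lt_mul_of_pos_right _ hρ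
                  rw [div_lt_one h2M]; linarith
              _ = ρ := one_mul ρ
    set σ' : ℝ → X := fun t => if t ≤ Ts then σs t else g (c t) with hσ'
    have hσ'le : ∀ t, t ≤ Ts → σ' t = σs t := fun t ht => if_pos ht
    have hσ'gt : ∀ t, Ts < t → σ' t = g (c t) := fun t ht => if_neg (not_le.2 ht)
    have hB : ((β.toNNReal + 1 : ℝ≥0) : ℝ) * (M:ℝ) = (K:ℝ) := by
      rw [hK]; push_cast; ring
    have hT'A : T' ∈ A := by
      refine ⟨⟨hT'0, hT'1⟩, σ', ?_, ?_, ?_⟩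
      · rw [hσ'le 0 hT0, hσ0]
      · apply LipschitzOnWith.of_dist_le_mul
        have aux : ∀ t ∈ Icc (0:ℝ) T', ∀ t' ∈ Icc (0:ℝ) T', t ≤ t' →
            dist (σ' t) (σ' t') ≤ K * dist t t' := by
          intro t ht t' ht' htt'
          have hdd : dist t t' = t' - t := by
            rw [Real.dist_eq, abs_of_nonpos (by linarith)]; ring
          rcases le_or_gt t' Ts with h1 | h1
          · rw [hσ'le t (htt'.trans h1), hσ'le t' h1]
            exact hσlip.dist_le_mul t ⟨ht.1, htt'.trans h1⟩ t' ⟨ht'.1, h1⟩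
          · have hc2 : c t' ∈ V := hcball t' h1.le ht'.2
            have ht'I : t' ∈ Icc (0:ℝ) 1 := ⟨ht'.1, ht'.2.trans hT'1⟩
            rcases le_or_gt t Ts with h2 | h2
            · rw [hσ'le t h2, hσ'gt t' h1]
              have e1 : dist (σs t) (σs Ts) ≤ K * (Ts - t) := by
                have := hσlip.dist_le_mul t ⟨ht.1, h2⟩ Ts ⟨hT0, le_rfl⟩
                rwa [Real.dist_eq, abs_of_nonpos (by linarith), neg_sub] at this
              have e2 : dist (σs Ts) (g (c t')) ≤ K * (t' - Ts) := by
                rw [← hgfx]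
                calc dist (g (c Ts)) (g (c t')) ≤ (β.toNNReal + 1 : ℝ≥0) * dist (c Ts) (c t') :=
                      hglip.dist_le_mul _ hfxV _ hc2
                  _ ≤ (β.toNNReal + 1 : ℝ≥0) * ((M:ℝ) * dist Ts t') := by
                      apply mul_le_mul_of_nonneg_left
                        (hc.dist_le_mul _ ⟨hT0, hT1⟩ _ ht'I) (by positivity)
                  _ = K * dist Ts t' := by rw [← mul_assoc, hB]
                  _ = K * (t' - Ts) := by
                      rw [Real.dist_eq, abs_of_nonpos (by linarith)]; ring
              calc dist (σs t) (g (c t')) ≤ dist (σs t) (σs Ts) + dist (σs Ts) (g (c t')) :=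
                    dist_triangle _ _ _
                _ ≤ K * (Ts - t) + K * (t' - Ts) := add_le_add e1 e2
                _ = K * dist t t' := by rw [hdd]; ring
            · rw [hσ'gt t h2, hσ'gt t' h1]
              have hc1 : c t ∈ V := hcball t h2.le ht.2
              have htI : t ∈ Icc (0:ℝ) 1 := ⟨ht.1, ht.2.trans hT'1⟩
              calc dist (g (c t)) (g (c t')) ≤ (β.toNNReal + 1 : ℝ≥0) * dist (c t) (c t') :=
                    hglip.dist_le_mul _ hc1 _ hc2
                _ ≤ (β.toNNReal + 1 : ℝ≥0) * ((M:ℝ) * dist t t') := by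
                    apply mul_le_mul_of_nonneg_left
                      (hc.dist_le_mul _ htI _ ht'I) (by positivity)
                _ = K * dist t t' := by rw [← mul_assoc, hB]
        intro t ht t' ht'
        rcases le_total t t' with h' | h'
        · exact aux t ht t' ht' h'
        · rw [dist_comm, dist_comm t t']; exact aux t' ht' t ht h'
      · intro t ht
        rcases le_or_gt t Ts with h1 | h1
        · rw [hσ'le t h1]; exact hσf t ⟨ht.1, h1⟩
        · rw [hσ'gt t h1]; exact hfV _ (hcball t h1.le ht.2)
    have := le_csSup hbdd hT'A
    simp only [hT'] at this
    linarith
  rw [hsup1] at hsup_mem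
  obtain ⟨-, σ, h1, h2, h3⟩ := hsup_mem
  exact ⟨σ, h1, h3, h2⟩


/-- Monodromy: `f` is injective. -/
lemma hl_injective {f : X → Y} (hf : ContDiff ℝ 1 f) {f' : X → X ≃L[ℝ] Y}
    (hf' : ∀ x, HasFDerivAt f (f' x : X →L[ℝ] Y) x) {β : ℝ} (hβ : 0 < β)
    (hbound : ∀ x, ‖((f' x).symm : Y →L[ℝ] X)‖ ≤ β) :
    Function.Injective f := by
  classical
  intro a b hab
  set γ : ℝ → X := fun t => a + t • (b - a) with hγ
  have hγcont : Continuous γ := by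
    exact continuous_const.add (continuous_id.smul continuous_const)
  have hγ0 : γ 0 = a := by simp [hγ]
  have hγ1 : γ 1 = b := by simp [hγ]
  have hmaps : MapsTo γ (Icc (0:ℝ) 1) (segment ℝ a b) := by
    intro t ht
    rw [segment_eq_image']
    exact mem_image_of_mem _ ht
  have hS_comp : IsCompact (segment ℝ a b) := by
    rw [segment_eq_image']
    exact isCompact_Icc.image (continuous_const.add (continuous_id.smul continuous_const))
  obtain ⟨C, hC⟩ := hS_comp.exists_bound_of_continuousOn
    ((hf.continuous_fderiv one_ne_zero).norm.continuousOn)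
  set Cn : ℝ≥0 := ⟨max C 0, le_max_right _ _⟩ with hCn
  have hCb : ∀ x ∈ segment ℝ a b, ‖fderiv ℝ f x‖₊ ≤ Cn := by
    intro x hx
    rw [← NNReal.coe_le_coe, coe_nnnorm]
    have := hC x hx
    rw [Real.norm_eq_abs, abs_of_nonneg (norm_nonneg _)] at this
    exact this.trans (le_max_left _ _)
  have hfS : LipschitzOnWith Cn f (segment ℝ a b) :=
    Convex.lipschitzOnWith_of_nnnorm_fderiv_le (fun x _ => hf.differentiable one_ne_zero x)
      hCb (convex_segment a b)
  have hγlipd : ∀ t t' : ℝ, dist (γ t) (γ t') = dist t t' * ‖b - a‖ := by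
    intro t t'
    rw [dist_eq_norm]
    have : γ t - γ t' = (t - t') • (b - a) := by simp [hγ]; module
    rw [this, norm_smul, Real.norm_eq_abs, Real.dist_eq]
  have hγlip : LipschitzWith ‖b - a‖₊ γ := by
    apply LipschitzWith.of_dist_le_mul
    intro t t'
    rw [hγlipd]
    rw [coe_nnnorm, mul_comm]
  set M : ℝ≥0 := Cn * ‖b - a‖₊ with hM
  set F : ℝ → Y := f ∘ γ with hFdef
  have hF : LipschitzOnWith M F (Icc 0 1) := hfS.comp hγlip.lipschitzOnWith hmaps
  set y : Y := f a with hy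
  have hFb : f b = y := hab.symm
  have hF0 : F 0 = y := by simp [hFdef, hγ0, hy]
  have hF1 : F 1 = y := by simp [hFdef, hγ1, hFb]
  set H : ℝ → ℝ → Y := fun s t => (1 - s) • F t + s • y with hH
  have hH0 : ∀ s, H s 0 = y := by
    intro s; simp only [hH, hF0, ← add_smul]; norm_num
  have hH1 : ∀ s, H s 1 = y := by
    intro s; simp only [hH, hF1, ← add_smul]; norm_num
  have hHs0 : ∀ t, H 0 t = F t := by intro t; simp [hH]
  have hHs1 : ∀ t, H 1 t = y := by intro t; simp [hH]
  have hHsub : ∀ s s' t, H s t - H s' t = (s - s') • (y - F t) := by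
    intro s s' t; simp only [hH]; module
  have hHtsub : ∀ s t t', H s t - H s t' = (1 - s) • (F t - F t') := by
    intro s t t'; simp only [hH]; module
  have hHlip : ∀ s ∈ Icc (0:ℝ) 1, LipschitzOnWith M (H s) (Icc 0 1) := by
    intro s hs
    apply LipschitzOnWith.of_dist_le_mul
    intro t ht t' ht'
    rw [dist_eq_norm, hHtsub, norm_smul, Real.norm_eq_abs,
      abs_of_nonneg (by linarith [hs.1, hs.2])]
    calc (1 - s) * ‖F t - F t'‖ ≤ 1 * ‖F t - F t'‖ := by
          apply mul_le_mul_of_nonneg_right _ (norm_nonneg _)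
          linarith [hs.1]
      _ = dist (F t) (F t') := by rw [one_mul, dist_eq_norm]
      _ ≤ M * dist t t' := hF.dist_le_mul t ht t' ht'
  have hstart : ∀ s, f a = H s 0 := fun s => by rw [hH0]
  have hlift : ∀ s ∈ Icc (0:ℝ) 1, ∃ σ : ℝ → X, σ 0 = a ∧
      (∀ t ∈ Icc (0:ℝ) 1, f (σ t) = H s t) ∧
      LipschitzOnWith ((β.toNNReal + 1) * M) σ (Icc 0 1) :=
    fun s hs => hl_lift_exists hf hf' hβ hbound (hHlip s hs) (hstart s)
  choose! σ hσ0 hσf hσlip using hlift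
  set Kr : ℝ := (((β.toNNReal + 1) * M : ℝ≥0) : ℝ) with hKrdef
  have hKr0 : 0 ≤ Kr := NNReal.coe_nonneg _
  have lipσ : ∀ s ∈ Icc (0:ℝ) 1, ∀ t ∈ Icc (0:ℝ) 1, ∀ t' ∈ Icc (0:ℝ) 1,
      dist (σ s t) (σ s t') ≤ Kr * dist t t' :=
    fun s hs t ht t' ht' => (hσlip s hs).dist_le_mul t ht t' ht'
  set RY : ℝ := (M:ℝ) + 1 with hRYdef
  have hRY : 0 < RY := by positivity
  have hHdiff : ∀ s s' t, t ∈ Icc (0:ℝ) 1 → dist (H s t) (H s' t) ≤ dist s s' * RY := by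
    intro s s' t ht
    rw [dist_eq_norm, hHsub, norm_smul, Real.norm_eq_abs, ← Real.dist_eq]
    apply mul_le_mul_of_nonneg_left _ dist_nonneg
    have h1 : ‖y - F t‖ = dist (F 0) (F t) := by rw [dist_eq_norm, hF0]
    rw [h1]
    calc dist (F 0) (F t) ≤ M * dist 0 t := hF.dist_le_mul 0 ⟨le_rfl, zero_le_one⟩ t ht
      _ ≤ M * 1 := by
          apply mul_le_mul_of_nonneg_left _ (M.coe_nonneg)
          rw [Real.dist_eq, abs_of_nonpos (by linarith [ht.1]), neg_sub, sub_zero]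
          exact ht.2
      _ ≤ RY := by rw [mul_one, hRYdef]; linarith
  have hKdiv : ∀ r : ℝ, 0 < r → Kr * (r / (4 * (Kr + 1))) ≤ r / 4 := by
    intro r hr
    have heq : Kr * (r / (4 * (Kr + 1))) = Kr * r / (4 * (Kr + 1)) := by
      rw [mul_div_assoc]
    rw [heq, div_le_div_iff₀ (by positivity) (by norm_num)]
    nlinarith [hr, hKr0]
  set Br : ℝ := β + 1 with hBrdef
  have hBr : 0 < Br := by linarith
  have hBeq : ((β.toNNReal + 1 : ℝ≥0) : ℝ) = Br := by
    rw [NNReal.coe_add, Real.coe_toNNReal β hβ.le, NNReal.coe_one]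
  -- the inner monodromy statement
  have key : ∀ s₀ ∈ Icc (0:ℝ) 1, ∃ δ > 0, ∀ s ∈ Icc (0:ℝ) 1,
      dist s s₀ < δ → σ s 1 = σ s₀ 1 := by
    intro s₀ hs₀
    have hch : ∀ t : Icc (0:ℝ) 1, ∃ (U : Set X) (V : Set Y) (g : Y → X),
        IsOpen U ∧ σ s₀ t.1 ∈ U ∧ Set.InjOn f U ∧ IsOpen V ∧ f (σ s₀ t.1) ∈ V ∧
        (∀ w ∈ V, f (g w) = w) ∧ g (f (σ s₀ t.1)) = σ s₀ t.1 ∧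
        LipschitzOnWith (β.toNNReal + 1) g V :=
      fun t => hl_exists_chart hf hf' hβ hbound (σ s₀ t.1)
    choose U V g hU hxU hinj hV hfxV hfV hgfx hglip using hch
    have hHV : ∀ t : Icc (0:ℝ) 1, H s₀ t.1 ∈ V t := by
      intro t
      have := hfxV t
      rwa [hσf s₀ hs₀ t.1 t.2] at this
    have hg0 : ∀ t : Icc (0:ℝ) 1, g t (H s₀ t.1) = σ s₀ t.1 := by
      intro t
      have := hgfx t
      rwa [hσf s₀ hs₀ t.1 t.2] at this
    have hgl : ∀ t : Icc (0:ℝ) 1, ∀ w ∈ V t, ∀ w' ∈ V t,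
        dist (g t w) (g t w') ≤ Br * dist w w' := by
      intro t w hw w' hw'
      have := (hglip t).dist_le_mul w hw w' hw'
      rwa [hBeq] at this
    haveI : PreconnectedSpace (Icc (0:ℝ) 1) := Subtype.preconnectedSpace isPreconnected_Icc
    set D : Set (Icc (0:ℝ) 1) := {t | ∃ δ > 0, ∀ s ∈ Icc (0:ℝ) 1, dist s s₀ < δ →
        H s t.1 ∈ V t ∧ σ s t.1 = g t (H s t.1)} with hD
    have mem0 : (⟨0, le_rfl, zero_le_one⟩ : Icc (0:ℝ) 1) ∈ D := by
      refine ⟨1, one_pos, fun s hs _ => ?_⟩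
      have e1 : H s (0:ℝ) = H s₀ (0:ℝ) := by rw [hH0, hH0]
      constructor
      · rw [e1]; exact hHV _
      · rw [e1, hg0, hσ0 s hs, hσ0 s₀ hs₀]
    have hopen : IsOpen D := by
      rw [Metric.isOpen_iff]
      rintro t₀ ⟨δ₀, hδ₀, ht₀⟩
      obtain ⟨r₀, hr₀, hball₀⟩ := Metric.isOpen_iff.1 (hU t₀) _ (hxU t₀)
      set η : ℝ := r₀ / (4 * (Kr + 1)) with hη
      have hη0 : 0 < η := by positivity
      refine ⟨η, hη0, fun t htball => ?_⟩
      rw [mem_ball, Subtype.dist_eq] at htball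
      obtain ⟨ρt, hρt, hballt⟩ := Metric.isOpen_iff.1 (hV t) _ (hHV t)
      refine ⟨min δ₀ (min ρt (r₀ / (4 * Br)) / RY), by positivity, fun s hs hd => ?_⟩
      have hd0 : dist s s₀ < δ₀ := lt_of_lt_of_le hd (min_le_left _ _)
      have hdH : ∀ τ : Icc (0:ℝ) 1, dist (H s τ.1) (H s₀ τ.1) < min ρt (r₀ / (4 * Br)) := by
        intro τ
        calc dist (H s τ.1) (H s₀ τ.1) ≤ dist s s₀ * RY := hHdiff s s₀ τ.1 τ.2
          _ < (min ρt (r₀ / (4 * Br)) / RY) * RY := by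
              apply mul_lt_mul_of_pos_right _ hRY
              exact lt_of_lt_of_le hd (min_le_right _ _)
          _ = min ρt (r₀ / (4 * Br)) := div_mul_cancel₀ _ (ne_of_gt hRY)
      have hVmem : H s t.1 ∈ V t :=
        hballt (by rw [mem_ball]; exact lt_of_lt_of_le (hdH t) (min_le_left _ _))
      have h2 : dist (g t (H s t.1)) (σ s₀ t.1) ≤ Br * dist (H s t.1) (H s₀ t.1) := by
        have := hgl t _ hVmem _ (hHV t)
        rwa [hg0 t] at this
      have h2' : dist (g t (H s t.1)) (σ s₀ t.1) < r₀ / 4 := by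
        calc dist (g t (H s t.1)) (σ s₀ t.1) ≤ Br * dist (H s t.1) (H s₀ t.1) := h2
          _ < Br * (r₀ / (4 * Br)) := by
              apply mul_lt_mul_of_pos_left _ hBr
              exact lt_of_lt_of_le (hdH t) (min_le_right _ _)
          _ = r₀ / 4 := by field_simp
      obtain ⟨hVt₀, hgt₀⟩ := ht₀ s hs hd0
      have h4 : dist (σ s t₀.1) (σ s₀ t₀.1) < r₀ / 4 := by
        rw [hgt₀]
        have e2 : dist (g t₀ (H s t₀.1)) (σ s₀ t₀.1) ≤ Br * dist (H s t₀.1) (H s₀ t₀.1) := by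
          have := hgl t₀ _ hVt₀ _ (hHV t₀)
          rwa [hg0 t₀] at this
        calc dist (g t₀ (H s t₀.1)) (σ s₀ t₀.1) ≤ Br * dist (H s t₀.1) (H s₀ t₀.1) := e2
          _ < Br * (r₀ / (4 * Br)) := by
              apply mul_lt_mul_of_pos_left _ hBr
              exact lt_of_lt_of_le (hdH t₀) (min_le_right _ _)
          _ = r₀ / 4 := by field_simp
      have hKrη : Kr * η ≤ r₀ / 4 := by
        rw [hη]
        exact hKdiv r₀ hr₀
      have h5 : σ s t.1 ∈ U t₀ := by
        apply hball₀
        rw [mem_ball]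
        calc dist (σ s t.1) (σ s₀ t₀.1) ≤ dist (σ s t.1) (σ s t₀.1)
              + dist (σ s t₀.1) (σ s₀ t₀.1) := dist_triangle _ _ _
          _ < Kr * η + r₀ / 4 := by
              apply add_lt_add_of_le_of_lt _ h4
              calc dist (σ s t.1) (σ s t₀.1) ≤ Kr * dist t.1 t₀.1 :=
                    lipσ s hs t.1 t.2 t₀.1 t₀.2
                _ ≤ Kr * η := by
                    rcases eq_or_lt_of_le hKr0 with h | h
                    · rw [← h]; simp
                    · exact le_of_lt (mul_lt_mul_of_pos_left htball h)
          _ ≤ r₀ / 4 + r₀ / 4 := by linarith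
          _ < r₀ := by linarith
      have h6 : g t (H s t.1) ∈ U t₀ := by
        apply hball₀
        rw [mem_ball]
        calc dist (g t (H s t.1)) (σ s₀ t₀.1) ≤ dist (g t (H s t.1)) (σ s₀ t.1)
              + dist (σ s₀ t.1) (σ s₀ t₀.1) := dist_triangle _ _ _
          _ < r₀ / 4 + Kr * η := by
              apply add_lt_add_of_lt_of_le h2'
              calc dist (σ s₀ t.1) (σ s₀ t₀.1) ≤ Kr * dist t.1 t₀.1 :=
                    lipσ s₀ hs₀ t.1 t.2 t₀.1 t₀.2
                _ ≤ Kr * η := by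
                    rcases eq_or_lt_of_le hKr0 with h | h
                    · rw [← h]; simp
                    · exact le_of_lt (mul_lt_mul_of_pos_left htball h)
          _ ≤ r₀ / 4 + r₀ / 4 := by linarith
          _ < r₀ := by linarith
      have hfeq : f (σ s t.1) = f (g t (H s t.1)) := by
        rw [hσf s hs t.1 t.2, hfV t _ hVmem]
      exact ⟨hVmem, hinj t₀ h5 h6 hfeq⟩
    have hclosed : IsClosed D := by
      apply isClosed_of_closure_subset
      intro ts hts
      obtain ⟨rs, hrs, hballs⟩ := Metric.isOpen_iff.1 (hU ts) _ (hxU ts)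
      obtain ⟨ρs, hρs, hballVs⟩ := Metric.isOpen_iff.1 (hV ts) _ (hHV ts)
      obtain ⟨u, huD, hud⟩ := Metric.mem_closure_iff.1 hts (rs / (4 * (Kr + 1))) (by positivity)
      obtain ⟨δu, hδu, hu⟩ := huD
      rw [Subtype.dist_eq] at hud
      refine ⟨min δu (min ρs (rs / (4 * Br)) / RY), by positivity, fun s hs hd => ?_⟩
      have hdu : dist s s₀ < δu := lt_of_lt_of_le hd (min_le_left _ _)
      have hdH : ∀ τ : Icc (0:ℝ) 1, dist (H s τ.1) (H s₀ τ.1) < min ρs (rs / (4 * Br)) := by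
        intro τ
        calc dist (H s τ.1) (H s₀ τ.1) ≤ dist s s₀ * RY := hHdiff s s₀ τ.1 τ.2
          _ < (min ρs (rs / (4 * Br)) / RY) * RY := by
              apply mul_lt_mul_of_pos_right _ hRY
              exact lt_of_lt_of_le hd (min_le_right _ _)
          _ = min ρs (rs / (4 * Br)) := div_mul_cancel₀ _ (ne_of_gt hRY)
      have hVmem : H s ts.1 ∈ V ts :=
        hballVs (by rw [mem_ball]; exact lt_of_lt_of_le (hdH ts) (min_le_left _ _))
      have h2' : dist (g ts (H s ts.1)) (σ s₀ ts.1) < rs / 4 := by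
        have h2 : dist (g ts (H s ts.1)) (σ s₀ ts.1) ≤ Br * dist (H s ts.1) (H s₀ ts.1) := by
          have := hgl ts _ hVmem _ (hHV ts)
          rwa [hg0 ts] at this
        calc dist (g ts (H s ts.1)) (σ s₀ ts.1) ≤ Br * dist (H s ts.1) (H s₀ ts.1) := h2
          _ < Br * (rs / (4 * Br)) := by
              apply mul_lt_mul_of_pos_left _ hBr
              exact lt_of_lt_of_le (hdH ts) (min_le_right _ _)
          _ = rs / 4 := by field_simp
      obtain ⟨hVu, hgu⟩ := hu s hs hdu
      have hKru : Kr * dist ts.1 u.1 ≤ rs / 4 := by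
        have h1 : dist ts.1 u.1 ≤ rs / (4 * (Kr + 1)) := hud.le
        calc Kr * dist ts.1 u.1 ≤ Kr * (rs / (4 * (Kr + 1))) :=
              mul_le_mul_of_nonneg_left h1 hKr0
          _ ≤ rs / 4 := hKdiv rs hrs
      have h4 : dist (σ s u.1) (σ s₀ u.1) < rs / 4 := by
        rw [hgu]
        have e2 : dist (g u (H s u.1)) (σ s₀ u.1) ≤ Br * dist (H s u.1) (H s₀ u.1) := by
          have := hgl u _ hVu _ (hHV u)
          rwa [hg0 u] at this
        calc dist (g u (H s u.1)) (σ s₀ u.1) ≤ Br * dist (H s u.1) (H s₀ u.1) := e2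
          _ < Br * (rs / (4 * Br)) := by
              apply mul_lt_mul_of_pos_left _ hBr
              exact lt_of_lt_of_le (hdH u) (min_le_right _ _)
          _ = rs / 4 := by field_simp
      have h5 : σ s ts.1 ∈ U ts := by
        apply hballs
        rw [mem_ball]
        calc dist (σ s ts.1) (σ s₀ ts.1) ≤ dist (σ s ts.1) (σ s u.1)
              + dist (σ s u.1) (σ s₀ u.1) + dist (σ s₀ u.1) (σ s₀ ts.1) :=
              dist_triangle4 _ _ _ _
          _ ≤ Kr * dist ts.1 u.1 + dist (σ s u.1) (σ s₀ u.1) + Kr * dist u.1 ts.1 := by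
              apply add_le_add (add_le_add (lipσ s hs ts.1 ts.2 u.1 u.2) le_rfl)
                (lipσ s₀ hs₀ u.1 u.2 ts.1 ts.2)
          _ < rs / 4 + rs / 4 + rs / 4 := by
              have hKru' : Kr * dist u.1 ts.1 ≤ rs / 4 := by
                rw [dist_comm]
                exact hKru
              linarith [hKru, hKru', h4]
          _ < rs := by linarith
      have h6 : g ts (H s ts.1) ∈ U ts := by
        apply hballs
        rw [mem_ball]
        calc dist (g ts (H s ts.1)) (σ s₀ ts.1) < rs / 4 := h2'
          _ < rs := by linarith
      have hfeq : f (σ s ts.1) = f (g ts (H s ts.1)) := by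
        rw [hσf s hs ts.1 ts.2, hfV ts _ hVmem]
      exact ⟨hVmem, hinj ts h5 h6 hfeq⟩
    have hD_univ : D = univ := IsClopen.eq_univ ⟨hclosed, hopen⟩ ⟨_, mem0⟩
    have h1D : (⟨1, zero_le_one, le_rfl⟩ : Icc (0:ℝ) 1) ∈ D := hD_univ ▸ mem_univ _
    obtain ⟨δ₁, hδ₁, h1⟩ := h1D
    refine ⟨δ₁, hδ₁, fun s hs hd => ?_⟩
    have e1 := (h1 s hs hd).2
    have e2 := (h1 s₀ hs₀ (by rw [dist_self]; exact hδ₁)).2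
    rw [e1, e2, hH1, hH1]
  -- conclude by connectedness in s
  haveI : PreconnectedSpace (Icc (0:ℝ) 1) := Subtype.preconnectedSpace isPreconnected_Icc
  set E : Set (Icc (0:ℝ) 1) := {s | σ s.1 1 = σ 1 1} with hE
  have hEopen : IsOpen E := by
    rw [Metric.isOpen_iff]
    intro s₀ hs₀
    obtain ⟨δ, hδ, hkey⟩ := key s₀.1 s₀.2
    refine ⟨δ, hδ, fun s hsball => ?_⟩
    rw [mem_ball, Subtype.dist_eq] at hsball
    show σ s.1 1 = σ 1 1
    rw [hkey s.1 s.2 hsball]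
    exact hs₀
  have hEclosed : IsClosed E := by
    rw [← isOpen_compl_iff]
    rw [Metric.isOpen_iff]
    intro s₀ hs₀
    obtain ⟨δ, hδ, hkey⟩ := key s₀.1 s₀.2
    refine ⟨δ, hδ, fun s hsball => ?_⟩
    rw [mem_ball, Subtype.dist_eq] at hsball
    intro hmem
    apply hs₀
    show σ s₀.1 1 = σ 1 1
    rw [← hkey s.1 s.2 hsball]
    exact hmem
  have hEne : E.Nonempty := ⟨⟨1, zero_le_one, le_rfl⟩, rfl⟩
  have hEuniv : E = univ := IsClopen.eq_univ ⟨hEclosed, hEopen⟩ hEne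
  have h01 : σ 0 1 = σ 1 1 := by
    have : (⟨0, le_rfl, zero_le_one⟩ : Icc (0:ℝ) 1) ∈ E := by
      rw [hEuniv]
      trivial
    exact this
  -- identify σ 1 with the constant lift and σ 0 with γ
  have hI1 : (1:ℝ) ∈ Icc (0:ℝ) 1 := ⟨zero_le_one, le_rfl⟩
  have hI0 : (0:ℝ) ∈ Icc (0:ℝ) 1 := ⟨le_rfl, zero_le_one⟩
  have hσ1const : σ 1 1 = a := by
    have := hl_lift_unique hf hf' hβ hbound zero_le_one
      ((hσlip 1 hI1).continuousOn) (continuousOn_const (c := a))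
      (fun t ht => hσf 1 hI1 t ht)
      (fun t ht => by rw [hHs1 t, hy])
      (by rw [hσ0 1 hI1]) 1 hI1
    exact this
  have hσ0γ : σ 0 1 = b := by
    have := hl_lift_unique hf hf' hβ hbound zero_le_one
      ((hσlip 0 hI0).continuousOn) hγcont.continuousOn
      (fun t ht => hσf 0 hI0 t ht)
      (fun t ht => by rw [hHs0 t]; rfl)
      (by rw [hσ0 0 hI0, hγ0]) 1 hI1
    rw [this, hγ1]
  rw [hσ0γ, hσ1const] at h01
  exact h01.symm


lemma hl_surjective {f : X → Y} (hf : ContDiff ℝ 1 f) {f' : X → X ≃L[ℝ] Y}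
    (hf' : ∀ x, HasFDerivAt f (f' x : X →L[ℝ] Y) x) {β : ℝ} (hβ : 0 < β)
    (hbound : ∀ x, ‖((f' x).symm : Y →L[ℝ] X)‖ ≤ β) :
    Function.Surjective f := by
  intro y
  set c : ℝ → Y := fun t => f 0 + t • (y - f 0) with hc
  have hlip : LipschitzOnWith ‖y - f 0‖₊ c (Icc 0 1) := by
    apply LipschitzOnWith.of_dist_le_mul
    intro t ht t' ht'
    rw [dist_eq_norm]
    have he : c t - c t' = (t - t') • (y - f 0) := by simp only [hc]; module
    rw [he, norm_smul, Real.norm_eq_abs, ← Real.dist_eq, coe_nnnorm, mul_comm]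
  have h0 : f 0 = c 0 := by simp [hc]
  obtain ⟨σ, hσ0, hσf, -⟩ := hl_lift_exists hf hf' hβ hbound hlip h0
  refine ⟨σ 1, ?_⟩
  rw [hσf 1 ⟨zero_le_one, le_rfl⟩]
  simp [hc]


end HadamardAux

/-- Hadamard–Lévy theorem: a `C¹` map between Banach spaces whose derivative is
everywhere an isomorphism with uniformly bounded inverse is a global diffeomorphism. -/
theorem stmt12 {X Y : Type*} [NormedAddCommGroup X] [NormedSpace ℝ X] [CompleteSpace X]
    [NormedAddCommGroup Y] [NormedSpace ℝ Y] [CompleteSpace Y]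
    (f : X → Y) (hf : ContDiff ℝ 1 f)
    (f' : X → X ≃L[ℝ] Y) (hf' : ∀ x, HasFDerivAt f (f' x : X →L[ℝ] Y) x)
    {β : ℝ} (hβ : 0 < β) (hbound : ∀ x, ‖((f' x).symm : Y →L[ℝ] X)‖ ≤ β) :
    ∃ g : Y → X, ContDiff ℝ 1 g ∧ Function.LeftInverse g f ∧ Function.RightInverse g f := by
  have inj : Function.Injective f := hl_injective hf hf' hβ hbound
  have surj : Function.Surjective f := hl_surjective hf hf' hβ hbound
  refine ⟨Function.invFun f, ?_, Function.leftInverse_invFun inj,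
    Function.rightInverse_invFun surj⟩
  rw [contDiff_iff_contDiffAt]
  intro w
  obtain ⟨x, rfl⟩ := surj w
  have hstrict : HasStrictFDerivAt f (f' x : X →L[ℝ] Y) x :=
    hf.contDiffAt.hasStrictFDerivAt' (hf' x) one_ne_zero
  have hloc : ContDiffAt ℝ 1 (hstrict.localInverse f (f' x) x) (f x) :=
    hf.contDiffAt.to_localInverse (hf' x) one_ne_zero
  apply hloc.congr_of_eventuallyEq
  filter_upwards [hstrict.eventually_right_inverse] with v hv
  conv_lhs => rw [← hv]
  rw [Function.leftInverse_invFun inj _]
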